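/- Let Z ⊂ ℙ²(ℂ) be the set of nine points (1:1:1), (1:−1:1), (−1:1:1), (−1:−1:1), (0:0:1), (1:0:0), (0:1:0), (1:1:0), (1:−1:0). Then dim_ℂ [I(Z)]_4 = 6, and for all points Q in some nonempty Zariski-open subset of ℙ² one has dim_ℂ [I(Z) ∩ I(Q)³]_4 > 0 = max{dim_ℂ [I(Z)]_4 − 6, 0}; that is, Z admits an unexpected quartic. -/

import Mathlib

open MvPolynomial

noncomputable section

abbrev Pt : Type := Projectivization ℂ (Fin 3 → ℂ)
abbrev S3 : Type := MvPolynomial (Fin 3) ℂ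

/-- The point `P` lies on the line with coefficient vector `L`. -/
def onLine (L P : Pt) : Prop := ∑ i, L.rep i * P.rep i = 0

/-- The number of lines of the arrangement `A` passing through the point `P`. -/
def mult (A : Set Pt) (P : Pt) : ℕ := {L ∈ A | onLine L P}.ncard

/-- The singular points of the arrangement: points on at least two lines. -/
def Sing (A : Set Pt) : Set Pt := {P | 2 ≤ mult A P}

/-- The maximal multiplicity of a singular point of the arrangement. -/
def maxMult (A : Set Pt) : ℕ := sSup (mult A '' Sing A)

def Modular (A : Set Pt) (P : Pt) : Prop :=
  P ∈ Sing A ∧ ∀ Q ∈ Sing A, Q ≠ P → ∃ L ∈ A, onLine L P ∧ onLine L Q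

def Supersolvable (A : Set Pt) : Prop := ∃ P, Modular A P

/-- The homogeneous radical ideal of a set of points. -/
def vanishingIdeal (Z : Set Pt) : Ideal S3 where
  carrier := {f | ∀ (v : Fin 3 → ℂ) (hv : v ≠ 0), Projectivization.mk ℂ v hv ∈ Z → eval v f = 0}
  add_mem' := by
    intro f g hf hg v hv hvZ
    simp [hf v hv hvZ, hg v hv hvZ]
  zero_mem' := by
    intro v hv hvZ
    simp
  smul_mem' := by
    intro c f hf v hv hvZ
    simp [smul_eq_mul, hf v hv hvZ]

def pointIdeal (Q : Pt) : Ideal S3 := vanishingIdeal {Q}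

def homogComponent (I : Ideal S3) (t : ℕ) : Submodule ℂ S3 :=
  (Submodule.restrictScalars ℂ I) ⊓ homogeneousSubmodule (Fin 3) ℂ t

/-- `dim_ℂ [I]_t`. -/
def dimHomog (I : Ideal S3) (t : ℕ) : ℕ := Module.finrank ℂ (homogComponent I t)

/-- A property holds for all points in some nonempty Zariski-open subset of ℙ². -/
def Generically (Φ : Pt → Prop) : Prop :=
  ∃ g : S3, g ≠ 0 ∧ (∃ d, g.IsHomogeneous d) ∧ ∀ Q : Pt, eval Q.rep g ≠ 0 → Φ Q

/-- `Z` admits an unexpected curve of degree `j+1`. -/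
def admitsUnexpectedDeg (Z : Set Pt) (j : ℕ) : Prop :=
  Generically fun Q =>
    dimHomog (vanishingIdeal Z ⊓ pointIdeal Q ^ j) (j + 1) >
      max (dimHomog (vanishingIdeal Z) (j + 1) - j * (j + 1) / 2) 0

def AdmitsUnexpected (Z : Set Pt) : Prop := ∃ j, 1 ≤ j ∧ admitsUnexpectedDeg Z j

/-- The linear form defining the line `L`. -/
def linForm (L : Pt) : S3 := ∑ i, C (L.rep i) * X i

/-- The defining polynomial of a line arrangement. -/
def arrPoly (A : Set Pt) : S3 := ∏ᶠ L ∈ A, linForm L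

/-- The arrangement `A` is free with exponents `(a, b)`. -/
def FreeWithExp (A : Set Pt) (a b : ℕ) : Prop :=
  ∃ u v : Fin 3 → S3,
    (∑ i, u i * pderiv i (arrPoly A) = 0) ∧
    (∑ i, v i * pderiv i (arrPoly A) = 0) ∧
    (∀ i, (u i).IsHomogeneous a) ∧ (∀ i, (v i).IsHomogeneous b) ∧
    ∀ w : Fin 3 → S3, (∑ i, w i * pderiv i (arrPoly A) = 0) →
      ∃! pq : S3 × S3, w = pq.1 • u + pq.2 • v

def cvec (a b c : ℂ) : Fin 3 → ℂ := ![a, b, c]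

lemma cvec_ne_zero₀ {a : ℂ} (h : a ≠ 0) (b c : ℂ) : cvec a b c ≠ 0 := by
  intro H; exact h (by simpa [cvec] using congrFun H 0)

lemma cvec_ne_zero₁ (a : ℂ) {b : ℂ} (h : b ≠ 0) (c : ℂ) : cvec a b c ≠ 0 := by
  intro H; exact h (by simpa [cvec] using congrFun H 1)

lemma cvec_ne_zero₂ (a b : ℂ) {c : ℂ} (h : c ≠ 0) : cvec a b c ≠ 0 := by
  intro H; exact h (by simpa [cvec] using congrFun H 2)

def mkLine (a b c : ℂ) (h : cvec a b c ≠ 0) : Pt := Projectivization.mk ℂ (cvec a b c) h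

/-- The nine points of the `B₃` configuration. -/
def Z14 : Set Pt :=
  {mkLine 1 1 1 (cvec_ne_zero₀ (by norm_num) _ _),
   mkLine 1 (-1) 1 (cvec_ne_zero₀ (by norm_num) _ _),
   mkLine (-1) 1 1 (cvec_ne_zero₀ (by norm_num) _ _),
   mkLine (-1) (-1) 1 (cvec_ne_zero₀ (by norm_num) _ _),
   mkLine 0 0 1 (cvec_ne_zero₂ _ _ (by norm_num)),
   mkLine 1 0 0 (cvec_ne_zero₀ (by norm_num) _ _),
   mkLine 0 1 0 (cvec_ne_zero₁ _ (by norm_num) _),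
   mkLine 1 1 0 (cvec_ne_zero₀ (by norm_num) _ _),
   mkLine 1 (-1) 0 (cvec_ne_zero₀ (by norm_num) _ _)}

-- ===================== auxiliary development =====================

lemma mem_vanishingIdeal_iff {Z : Set Pt} {f : S3} :
    f ∈ vanishingIdeal Z ↔
      ∀ (v : Fin 3 → ℂ) (hv : v ≠ 0), Projectivization.mk ℂ v hv ∈ Z → eval v f = 0 :=
  Iff.rfl

lemma finsupp_degree_eq_sum (d : Fin 3 →₀ ℕ) : d.degree = d 0 + d 1 + d 2 := by
  rw [Finsupp.degree, ← Fin.sum_univ_three (fun i => d i)]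
  exact Finset.sum_subset (Finset.subset_univ _)
    (fun i _ hi => Finsupp.notMem_support_iff.mp hi)

lemma eval_smul_homog {f : S3} {n : ℕ} (hf : f.IsHomogeneous n) (t : ℂ) (v : Fin 3 → ℂ) :
    eval (t • v) f = t ^ n * eval v f := by
  rw [eval_eq', eval_eq', Finset.mul_sum]
  refine Finset.sum_congr rfl fun d hd => ?_
  have h1 := hf (MvPolynomial.mem_support_iff.mp hd)
  have hdeg : d 0 + d 1 + d 2 = n := by
    rw [← h1, ← finsupp_degree_eq_sum, Finsupp.degree_eq_weight_one]; rfl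
  have : ∀ i, (t • v) i = t * v i := fun i => rfl
  calc (MvPolynomial.coeff d f) * ∏ i, (t • v) i ^ d i
      = (MvPolynomial.coeff d f) * ((t ^ (d 0 + d 1 + d 2)) * ∏ i, v i ^ d i) := by
        simp only [this]
        rw [Fin.prod_univ_three, Fin.prod_univ_three]
        ring
    _ = t ^ n * ((MvPolynomial.coeff d f) * ∏ i, v i ^ d i) := by rw [hdeg]; ring

-- exponent vectors for the 15 monomials of degree 4
def expoV : Fin 15 → Fin 3 → ℕ :=
  ![![0,0,4], ![0,1,3], ![0,2,2], ![0,3,1], ![0,4,0], ![1,0,3], ![1,1,2], ![1,2,1], ![1,3,0],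
    ![2,0,2], ![2,1,1], ![2,2,0], ![3,0,1], ![3,1,0], ![4,0,0]]

def expo (k : Fin 15) : Fin 3 →₀ ℕ := Finsupp.equivFunOnFinite.symm (expoV k)

lemma expo_apply (k : Fin 15) (i : Fin 3) : expo k i = expoV k i := rfl

lemma expoV_injective : Function.Injective expoV := by decide

lemma expo_injective : Function.Injective expo :=
  fun k l h => expoV_injective (Finsupp.equivFunOnFinite.symm.injective h)

lemma degree_expo (k : Fin 15) : (expo k).degree = 4 := by
  rw [finsupp_degree_eq_sum]
  show expoV k 0 + expoV k 1 + expoV k 2 = 4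
  revert k; decide

def Emap : (Fin 15 → ℂ) →ₗ[ℂ] S3 :=
  ∑ k : Fin 15, (monomial (expo k)).comp (LinearMap.proj k)

lemma Emap_apply (w : Fin 15 → ℂ) : Emap w = ∑ k : Fin 15, monomial (expo k) (w k) := by
  simp [Emap]

lemma coeff_Emap (w : Fin 15 → ℂ) (k : Fin 15) :
    MvPolynomial.coeff (expo k) (Emap w) = w k := by
  rw [Emap_apply]
  rw [MvPolynomial.coeff_sum]
  rw [Finset.sum_eq_single k]
  · simp [MvPolynomial.coeff_monomial]
  · intro l _ hlk
    rw [MvPolynomial.coeff_monomial, if_neg (fun h => hlk (expo_injective h))]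
  · intro h; exact absurd (Finset.mem_univ k) h

lemma Emap_injective : Function.Injective Emap := by
  intro w w' h
  funext k
  rw [← coeff_Emap w k, ← coeff_Emap w' k, h]

lemma Emap_mem_homog (w : Fin 15 → ℂ) : Emap w ∈ homogeneousSubmodule (Fin 3) ℂ 4 := by
  rw [Emap_apply]
  exact Submodule.sum_mem _ fun k _ =>
    isHomogeneous_monomial _ (degree_expo k)

lemma exists_expoV {a b c : ℕ} (h : a + b + c = 4) : ∃ k : Fin 15, expoV k = ![a, b, c] := by
  have ha : a ≤ 4 := by omega
  have hb : b ≤ 4 := by omega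
  have hc : c ≤ 4 := by omega
  interval_cases a <;> interval_cases b <;> interval_cases c <;> first | decide | omega

lemma eq_Emap_coeff {f : S3} (hf : f ∈ homogeneousSubmodule (Fin 3) ℂ 4) :
    Emap (fun k => MvPolynomial.coeff (expo k) f) = f := by
  rw [Emap_apply]
  apply MvPolynomial.ext
  intro d
  rw [MvPolynomial.coeff_sum]
  by_cases hd : d.degree = 4
  · obtain ⟨k0, hk0⟩ : ∃ k, expo k = d := by
      obtain ⟨k, hk⟩ := exists_expoV (by rw [← finsupp_degree_eq_sum]; exact hd)
      refine ⟨k, ?_⟩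
      apply Finsupp.ext; intro i
      rw [expo_apply, hk]
      fin_cases i <;> rfl
    rw [Finset.sum_eq_single k0]
    · rw [MvPolynomial.coeff_monomial, if_pos hk0, hk0]
    · intro l _ hlk
      rw [MvPolynomial.coeff_monomial, if_neg (fun h => hlk (expo_injective (h.trans hk0.symm)))]
    · intro h; exact absurd (Finset.mem_univ k0) h
  · rw [Finset.sum_eq_zero, eq_comm]
    · exact hf.coeff_eq_zero (by exact hd)
    · intro l _
      rw [MvPolynomial.coeff_monomial, if_neg]
      intro h; exact hd (h ▸ degree_expo l)
-- ===================== the nine points and evaluation matrices =====================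

def ptvZ : Fin 9 → Fin 3 → ℤ :=
  ![![1,1,1], ![1,-1,1], ![-1,1,1], ![-1,-1,1], ![0,0,1], ![1,0,0], ![0,1,0], ![1,1,0], ![1,-1,0]]

def ptv : Fin 9 → Fin 3 → ℂ := fun i t => ((ptvZ i t : ℤ) : ℂ)

def MMz : Matrix (Fin 9) (Fin 15) ℤ := Matrix.of fun i k => ∏ t, ptvZ i t ^ expoV k t

def NNz : Matrix (Fin 15) (Fin 9) ℤ := Matrix.of
  ![![0, 0, 0, 0, 4, 0, 0, 0, 0],
    ![1, -1, 1, -1, 0, 0, 0, 0, 0],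
    ![1, 1, 1, 1, -4, 0, 0, -2, -2],
    ![0, 0, 0, 0, 0, 0, 0, 0, 0],
    ![0, 0, 0, 0, 0, 0, 4, 0, 0],
    ![1, 1, -1, -1, 0, 0, 0, 0, 0],
    ![1, -1, -1, 1, 0, 0, 0, -2, 2],
    ![0, 0, 0, 0, 0, 0, 0, 0, 0],
    ![0, 0, 0, 0, 0, 0, 0, 2, -2],
    ![0, 0, 0, 0, 0, 0, 0, 0, 0],
    ![0, 0, 0, 0, 0, 0, 0, 0, 0],
    ![0, 0, 0, 0, 0, -4, -4, 2, 2],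
    ![0, 0, 0, 0, 0, 0, 0, 0, 0],
    ![0, 0, 0, 0, 0, 0, 0, 0, 0],
    ![0, 0, 0, 0, 0, 4, 0, 0, 0]]

set_option maxRecDepth 40000 in
lemma MMz_mul_NNz : MMz * NNz = (4 : ℤ) • 1 := by decide

def MM : Matrix (Fin 9) (Fin 15) ℂ := MMz.map (Int.castRingHom ℂ)
def NN : Matrix (Fin 15) (Fin 9) ℂ := ((4:ℂ)⁻¹) • NNz.map (Int.castRingHom ℂ)

lemma MM_mul_NN : MM * NN = 1 := by
  ext i j
  rw [Matrix.mul_apply]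
  have hk : ∀ k, MM i k * NN k j = 4⁻¹ * ((MMz i k * NNz k j : ℤ) : ℂ) := by
    intro k
    simp only [MM, NN, Matrix.map_apply, Matrix.smul_apply, Int.coe_castRingHom,
      smul_eq_mul, Int.cast_mul]
    ring
  rw [Finset.sum_congr rfl (fun k _ => hk k), ← Finset.mul_sum, ← Int.cast_sum,
    ← Matrix.mul_apply, MMz_mul_NNz]
  by_cases hij : i = j <;>
    simp [Matrix.smul_apply, Matrix.one_apply, hij] <;> norm_num

def Lmap : (Fin 15 → ℂ) →ₗ[ℂ] (Fin 9 → ℂ) := MM.mulVecLin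

lemma Lmap_surjective : Function.Surjective Lmap := by
  intro t
  refine ⟨NN.mulVec t, ?_⟩
  show MM.mulVec (NN.mulVec t) = t
  rw [Matrix.mulVec_mulVec, MM_mul_NN, Matrix.one_mulVec]

lemma eval_Emap (w : Fin 15 → ℂ) (i : Fin 9) :
    eval (ptv i) (Emap w) = MM.mulVec w i := by
  rw [Emap_apply, map_sum]
  rw [Matrix.mulVec, dotProduct]
  refine Finset.sum_congr rfl fun k _ => ?_
  rw [eval_monomial]
  rw [Finsupp.prod_fintype _ _ (fun t => pow_zero _)]
  have : ∀ t, (expo k) t = expoV k t := expo_apply k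
  simp only [this]
  rw [MM, Matrix.map_apply, MMz, Matrix.of_apply]
  simp only [map_prod, map_pow, Int.coe_castRingHom, ptv]
  ring
-- ===================== the points as elements of Z14 =====================

lemma ptv_eq0 : ptv 0 = cvec 1 1 1 := by
  have hz : ptvZ 0 = (![1,1,1] : Fin 3 → ℤ) := by decide
  funext t
  show ((ptvZ 0 t : ℤ) : ℂ) = _
  rw [hz]
  fin_cases t <;> norm_num [cvec]

lemma ptv_eq1 : ptv 1 = cvec 1 (-1) 1 := by
  have hz : ptvZ 1 = (![1,-1,1] : Fin 3 → ℤ) := by decide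
  funext t
  show ((ptvZ 1 t : ℤ) : ℂ) = _
  rw [hz]
  fin_cases t <;> norm_num [cvec]

lemma ptv_eq2 : ptv 2 = cvec (-1) 1 1 := by
  have hz : ptvZ 2 = (![-1,1,1] : Fin 3 → ℤ) := by decide
  funext t
  show ((ptvZ 2 t : ℤ) : ℂ) = _
  rw [hz]
  fin_cases t <;> norm_num [cvec]

lemma ptv_eq3 : ptv 3 = cvec (-1) (-1) 1 := by
  have hz : ptvZ 3 = (![-1,-1,1] : Fin 3 → ℤ) := by decide
  funext t
  show ((ptvZ 3 t : ℤ) : ℂ) = _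
  rw [hz]
  fin_cases t <;> norm_num [cvec]

lemma ptv_eq4 : ptv 4 = cvec 0 0 1 := by
  have hz : ptvZ 4 = (![0,0,1] : Fin 3 → ℤ) := by decide
  funext t
  show ((ptvZ 4 t : ℤ) : ℂ) = _
  rw [hz]
  fin_cases t <;> norm_num [cvec]

lemma ptv_eq5 : ptv 5 = cvec 1 0 0 := by
  have hz : ptvZ 5 = (![1,0,0] : Fin 3 → ℤ) := by decide
  funext t
  show ((ptvZ 5 t : ℤ) : ℂ) = _
  rw [hz]
  fin_cases t <;> norm_num [cvec]

lemma ptv_eq6 : ptv 6 = cvec 0 1 0 := by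
  have hz : ptvZ 6 = (![0,1,0] : Fin 3 → ℤ) := by decide
  funext t
  show ((ptvZ 6 t : ℤ) : ℂ) = _
  rw [hz]
  fin_cases t <;> norm_num [cvec]

lemma ptv_eq7 : ptv 7 = cvec 1 1 0 := by
  have hz : ptvZ 7 = (![1,1,0] : Fin 3 → ℤ) := by decide
  funext t
  show ((ptvZ 7 t : ℤ) : ℂ) = _
  rw [hz]
  fin_cases t <;> norm_num [cvec]

lemma ptv_eq8 : ptv 8 = cvec 1 (-1) 0 := by
  have hz : ptvZ 8 = (![1,-1,0] : Fin 3 → ℤ) := by decide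
  funext t
  show ((ptvZ 8 t : ℤ) : ℂ) = _
  rw [hz]
  fin_cases t <;> norm_num [cvec]

lemma ptvZ_ne (i : Fin 9) : ¬ (∀ t, ptvZ i t = 0) := by revert i; decide

lemma ptv_ne (i : Fin 9) : ptv i ≠ 0 := fun h =>
  ptvZ_ne i (fun t => by
    have h2 : ((ptvZ i t : ℤ) : ℂ) = ((0 : ℤ) : ℂ) := by
      simpa [ptv] using congrFun h t
    exact_mod_cast h2)

lemma mk_congr' {v w : Fin 3 → ℂ} (h : v = w) (hv : v ≠ 0) (hw : w ≠ 0) :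
    Projectivization.mk ℂ v hv = Projectivization.mk ℂ w hw := by subst h; rfl

lemma mk_ptv_mem (i : Fin 9) : Projectivization.mk ℂ (ptv i) (ptv_ne i) ∈ Z14 := by
  fin_cases i <;>
    simp only [Z14, Set.mem_insert_iff, Set.mem_singleton_iff, mkLine]
  · exact Or.inl (mk_congr' ptv_eq0 _ _)
  · exact Or.inr (Or.inl (mk_congr' ptv_eq1 _ _))
  · exact Or.inr (Or.inr (Or.inl (mk_congr' ptv_eq2 _ _)))
  · exact Or.inr (Or.inr (Or.inr (Or.inl (mk_congr' ptv_eq3 _ _))))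
  · exact Or.inr (Or.inr (Or.inr (Or.inr (Or.inl (mk_congr' ptv_eq4 _ _)))))
  · exact Or.inr (Or.inr (Or.inr (Or.inr (Or.inr (Or.inl (mk_congr' ptv_eq5 _ _))))))
  · exact Or.inr (Or.inr (Or.inr (Or.inr (Or.inr (Or.inr (Or.inl (mk_congr' ptv_eq6 _ _)))))))
  · exact Or.inr (Or.inr (Or.inr (Or.inr (Or.inr (Or.inr (Or.inr (Or.inl (mk_congr' ptv_eq7 _ _))))))))
  · exact Or.inr (Or.inr (Or.inr (Or.inr (Or.inr (Or.inr (Or.inr (Or.inr (mk_congr' ptv_eq8 _ _))))))))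

lemma homog_mem_vanishing_iff {f : S3} (hf : f.IsHomogeneous 4) :
    f ∈ vanishingIdeal Z14 ↔ ∀ i : Fin 9, eval (ptv i) f = 0 := by
  constructor
  · intro h i
    exact h (ptv i) (ptv_ne i) (mk_ptv_mem i)
  · intro h v hv hmem
    have h0 : eval (cvec 1 1 1) f = 0 := by rw [← ptv_eq0]; exact h 0
    have h1 : eval (cvec 1 (-1) 1) f = 0 := by rw [← ptv_eq1]; exact h 1
    have h2 : eval (cvec (-1) 1 1) f = 0 := by rw [← ptv_eq2]; exact h 2
    have h3 : eval (cvec (-1) (-1) 1) f = 0 := by rw [← ptv_eq3]; exact h 3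
    have h4 : eval (cvec 0 0 1) f = 0 := by rw [← ptv_eq4]; exact h 4
    have h5 : eval (cvec 1 0 0) f = 0 := by rw [← ptv_eq5]; exact h 5
    have h6 : eval (cvec 0 1 0) f = 0 := by rw [← ptv_eq6]; exact h 6
    have h7 : eval (cvec 1 1 0) f = 0 := by rw [← ptv_eq7]; exact h 7
    have h8 : eval (cvec 1 (-1) 0) f = 0 := by rw [← ptv_eq8]; exact h 8
    simp only [Z14, Set.mem_insert_iff, Set.mem_singleton_iff, mkLine] at hmem
    rcases hmem with hm|hm|hm|hm|hm|hm|hm|hm|hm <;>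
      obtain ⟨t, rfl⟩ := (Projectivization.mk_eq_mk_iff' ℂ _ _ hv _).mp hm <;>
      rw [eval_smul_homog hf] <;>
      simp [h0, h1, h2, h3, h4, h5, h6, h7, h8]
-- ===================== dimension count =====================

lemma homogSubmodule_eq_range : homogeneousSubmodule (Fin 3) ℂ 4 = LinearMap.range Emap := by
  ext f
  constructor
  · intro hf
    exact ⟨fun k => MvPolynomial.coeff (expo k) f, eq_Emap_coeff hf⟩
  · rintro ⟨w, rfl⟩
    exact Emap_mem_homog w

instance homog4_findim : FiniteDimensional ℂ (homogeneousSubmodule (Fin 3) ℂ 4) := by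
  rw [homogSubmodule_eq_range]
  infer_instance

instance homogComponent_findim (I : Ideal S3) :
    FiniteDimensional ℂ (homogComponent I 4) :=
  Submodule.finiteDimensional_of_le (inf_le_right :
    homogComponent I 4 ≤ homogeneousSubmodule (Fin 3) ℂ 4)

lemma homogComponent_Z14_eq :
    homogComponent (vanishingIdeal Z14) 4 = Submodule.map Emap (LinearMap.ker Lmap) := by
  ext f
  rw [homogComponent, Submodule.mem_inf]
  constructor
  · rintro ⟨hI, hH⟩
    rw [Submodule.restrictScalars_mem] at hI
    refine ⟨fun k => MvPolynomial.coeff (expo k) f, ?_, eq_Emap_coeff hH⟩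
    simp only [SetLike.mem_coe, LinearMap.mem_ker]
    funext i
    show MM.mulVec (fun k => MvPolynomial.coeff (expo k) f) i = (0 : Fin 9 → ℂ) i
    rw [← eval_Emap, eq_Emap_coeff hH, Pi.zero_apply]
    exact (homog_mem_vanishing_iff hH).mp hI i
  · rintro ⟨w, hw, rfl⟩
    refine ⟨?_, Emap_mem_homog w⟩
    rw [Submodule.restrictScalars_mem]
    rw [homog_mem_vanishing_iff (Emap_mem_homog w)]
    intro i
    rw [eval_Emap]
    simp only [SetLike.mem_coe, LinearMap.mem_ker] at hw
    have h2 : MM.mulVec w = 0 := hw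
    rw [h2]
    rfl

lemma dim_Z14 : dimHomog (vanishingIdeal Z14) 4 = 6 := by
  rw [dimHomog, homogComponent_Z14_eq]
  rw [← LinearEquiv.finrank_eq (Submodule.equivMapOfInjective Emap Emap_injective
    (LinearMap.ker Lmap))]
  have h1 := LinearMap.finrank_range_add_finrank_ker Lmap
  rw [LinearMap.range_eq_top.mpr Lmap_surjective] at h1
  rw [finrank_top] at h1
  simp only [Module.finrank_pi] at h1
  simp only [Fintype.card_fin] at h1
  omega
-- ===================== the unexpected quartic =====================

def l1 (Q : Pt) : S3 := C (Q.rep 1) * X 0 - C (Q.rep 0) * X 1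
def l2 (Q : Pt) : S3 := C (Q.rep 2) * X 1 - C (Q.rep 1) * X 2

def FQ (Q : Pt) : S3 :=
  C (2*(Q.rep 0)*((Q.rep 0)^2 - (Q.rep 1)^2)) * (l2 Q)^4
  + C (2*(Q.rep 0)*(Q.rep 1)*((Q.rep 0)^2 - (Q.rep 1)^2)) * ((l2 Q)^3 * X 2)
  + C (2*(Q.rep 2)*(3*(Q.rep 0)^2 - (Q.rep 1)^2)) * (l1 Q * (l2 Q)^3)
  + C (3*(Q.rep 1)*(Q.rep 2)*((Q.rep 0)^2 - (Q.rep 1)^2)) * (l1 Q * (l2 Q)^2 * X 2)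
  + C (6*(Q.rep 0)*(Q.rep 2)^2) * ((l1 Q)^2 * (l2 Q)^2)
  + C (2*(Q.rep 2)^3) * ((l1 Q)^3 * l2 Q)
  + C ((Q.rep 1)*(Q.rep 2)*((Q.rep 1)^2 - (Q.rep 2)^2)) * ((l1 Q)^3 * X 2)

lemma l1_homog (Q : Pt) : (l1 Q).IsHomogeneous 1 :=
  (isHomogeneous_C_mul_X _ 0).sub (isHomogeneous_C_mul_X _ 1)

lemma l2_homog (Q : Pt) : (l2 Q).IsHomogeneous 1 :=
  (isHomogeneous_C_mul_X _ 1).sub (isHomogeneous_C_mul_X _ 2)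

lemma FQ_homog (Q : Pt) : (FQ Q).IsHomogeneous 4 := by
  have h1 := l1_homog Q
  have h2 := l2_homog Q
  have hX : (X 2 : S3).IsHomogeneous 1 := isHomogeneous_X ℂ 2
  refine IsHomogeneous.add (IsHomogeneous.add (IsHomogeneous.add (IsHomogeneous.add
    (IsHomogeneous.add (IsHomogeneous.add ?_ ?_) ?_) ?_) ?_) ?_) ?_
  · exact (h2.pow 4).C_mul _
  · exact ((h2.pow 3).mul hX).C_mul _
  · exact (h1.mul (h2.pow 3)).C_mul _
  · exact ((h1.mul (h2.pow 2)).mul hX).C_mul _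
  · exact ((h1.pow 2).mul (h2.pow 2)).C_mul _
  · exact ((h1.pow 3).mul h2).C_mul _
  · exact ((h1.pow 3).mul hX).C_mul _

lemma l1_mem (Q : Pt) : l1 Q ∈ pointIdeal Q := by
  rw [pointIdeal, mem_vanishingIdeal_iff]
  intro v hv hm
  rw [Set.mem_singleton_iff] at hm
  rw [← Projectivization.mk_rep Q] at hm
  obtain ⟨t, rfl⟩ := (Projectivization.mk_eq_mk_iff' ℂ _ _ hv Q.rep_nonzero).mp hm
  simp [l1, Pi.smul_apply, smul_eq_mul]
  ring

lemma l2_mem (Q : Pt) : l2 Q ∈ pointIdeal Q := by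
  rw [pointIdeal, mem_vanishingIdeal_iff]
  intro v hv hm
  rw [Set.mem_singleton_iff] at hm
  rw [← Projectivization.mk_rep Q] at hm
  obtain ⟨t, rfl⟩ := (Projectivization.mk_eq_mk_iff' ℂ _ _ hv Q.rep_nonzero).mp hm
  simp [l2, Pi.smul_apply, smul_eq_mul]
  ring

lemma mem_pow3 {J : Ideal S3} {x y z : S3} (hx : x ∈ J) (hy : y ∈ J) (hz : z ∈ J) (s : S3) :
    s * (x * y * z) ∈ J ^ 3 := by
  have e : J ^ 3 = J * J * J := by
    have e1 : J ^ 3 = J ^ 2 * J := pow_succ J 2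
    have e2 : J ^ 2 = J * J := sq J
    rw [e1, e2]
  have h : x * y * z ∈ J ^ 3 := by
    rw [e]
    exact Ideal.mul_mem_mul (Ideal.mul_mem_mul hx hy) hz
  exact Ideal.mul_mem_left _ s h

lemma FQ_mem_pow3 (Q : Pt) : FQ Q ∈ pointIdeal Q ^ 3 := by
  have h1 := l1_mem Q
  have h2 := l2_mem Q
  rw [FQ]
  refine Ideal.add_mem _ (Ideal.add_mem _ (Ideal.add_mem _ (Ideal.add_mem _
    (Ideal.add_mem _ (Ideal.add_mem _ ?_ ?_) ?_) ?_) ?_) ?_) ?_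
  · rw [show (C (2*(Q.rep 0)*((Q.rep 0)^2 - (Q.rep 1)^2)) : S3) * (l2 Q)^4
      = (C (2*(Q.rep 0)*((Q.rep 0)^2 - (Q.rep 1)^2)) * l2 Q) * (l2 Q * l2 Q * l2 Q) by ring]
    exact mem_pow3 h2 h2 h2 _
  · rw [show (C (2*(Q.rep 0)*(Q.rep 1)*((Q.rep 0)^2 - (Q.rep 1)^2)) : S3) * ((l2 Q)^3 * X 2)
      = (C (2*(Q.rep 0)*(Q.rep 1)*((Q.rep 0)^2 - (Q.rep 1)^2)) * X 2) * (l2 Q * l2 Q * l2 Q) by ring]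
    exact mem_pow3 h2 h2 h2 _
  · rw [show (C (2*(Q.rep 2)*(3*(Q.rep 0)^2 - (Q.rep 1)^2)) : S3) * (l1 Q * (l2 Q)^3)
      = (C (2*(Q.rep 2)*(3*(Q.rep 0)^2 - (Q.rep 1)^2)) * l2 Q) * (l1 Q * l2 Q * l2 Q) by ring]
    exact mem_pow3 h1 h2 h2 _
  · rw [show (C (3*(Q.rep 1)*(Q.rep 2)*((Q.rep 0)^2 - (Q.rep 1)^2)) : S3) * (l1 Q * (l2 Q)^2 * X 2)
      = (C (3*(Q.rep 1)*(Q.rep 2)*((Q.rep 0)^2 - (Q.rep 1)^2)) * X 2) * (l1 Q * l2 Q * l2 Q) by ring]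
    exact mem_pow3 h1 h2 h2 _
  · rw [show (C (6*(Q.rep 0)*(Q.rep 2)^2) : S3) * ((l1 Q)^2 * (l2 Q)^2)
      = (C (6*(Q.rep 0)*(Q.rep 2)^2) * l1 Q) * (l1 Q * l2 Q * l2 Q) by ring]
    exact mem_pow3 h1 h2 h2 _
  · rw [show (C (2*(Q.rep 2)^3) : S3) * ((l1 Q)^3 * l2 Q)
      = (C (2*(Q.rep 2)^3) * l2 Q) * (l1 Q * l1 Q * l1 Q) by ring]
    exact mem_pow3 h1 h1 h1 _
  · rw [show (C ((Q.rep 1)*(Q.rep 2)*((Q.rep 1)^2 - (Q.rep 2)^2)) : S3) * ((l1 Q)^3 * X 2)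
      = (C ((Q.rep 1)*(Q.rep 2)*((Q.rep 1)^2 - (Q.rep 2)^2)) * X 2) * (l1 Q * l1 Q * l1 Q) by ring]
    exact mem_pow3 h1 h1 h1 _

lemma cvec_app0 (a b c : ℂ) : cvec a b c 0 = a := rfl
lemma cvec_app1 (a b c : ℂ) : cvec a b c 1 = b := rfl
lemma cvec_app2 (a b c : ℂ) : cvec a b c 2 = c := rfl

lemma FQ_vanishes (Q : Pt) : FQ Q ∈ vanishingIdeal Z14 := by
  have H0 : eval (cvec 1 1 1) (FQ Q) = 0 := by
    simp [FQ, l1, l2, cvec_app0, cvec_app1, cvec_app2] <;> ring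
  have H1 : eval (cvec 1 (-1) 1) (FQ Q) = 0 := by
    simp [FQ, l1, l2, cvec_app0, cvec_app1, cvec_app2] <;> ring
  have H2 : eval (cvec (-1) 1 1) (FQ Q) = 0 := by
    simp [FQ, l1, l2, cvec_app0, cvec_app1, cvec_app2] <;> ring
  have H3 : eval (cvec (-1) (-1) 1) (FQ Q) = 0 := by
    simp [FQ, l1, l2, cvec_app0, cvec_app1, cvec_app2] <;> ring
  have H4 : eval (cvec 0 0 1) (FQ Q) = 0 := by
    simp [FQ, l1, l2, cvec_app0, cvec_app1, cvec_app2] <;> ring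
  have H5 : eval (cvec 1 0 0) (FQ Q) = 0 := by
    simp [FQ, l1, l2, cvec_app0, cvec_app1, cvec_app2] <;> ring
  have H6 : eval (cvec 0 1 0) (FQ Q) = 0 := by
    simp [FQ, l1, l2, cvec_app0, cvec_app1, cvec_app2] <;> ring
  have H7 : eval (cvec 1 1 0) (FQ Q) = 0 := by
    simp [FQ, l1, l2, cvec_app0, cvec_app1, cvec_app2] <;> ring
  have H8 : eval (cvec 1 (-1) 0) (FQ Q) = 0 := by
    simp [FQ, l1, l2, cvec_app0, cvec_app1, cvec_app2] <;> ring
  rw [homog_mem_vanishing_iff (FQ_homog Q)]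
  intro i
  fin_cases i
  · exact ptv_eq0.symm ▸ H0
  · exact ptv_eq1.symm ▸ H1
  · exact ptv_eq2.symm ▸ H2
  · exact ptv_eq3.symm ▸ H3
  · exact ptv_eq4.symm ▸ H4
  · exact ptv_eq5.symm ▸ H5
  · exact ptv_eq6.symm ▸ H6
  · exact ptv_eq7.symm ▸ H7
  · exact ptv_eq8.symm ▸ H8

def gpoly : S3 := C (-12) * (X 1 ^ 3 * X 2 ^ 4)

lemma gpoly_ne : gpoly ≠ 0 := by
  intro h
  have h2 := congrArg (eval (cvec 0 1 1)) h
  simp [gpoly, cvec_app1, cvec_app2] at h2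

lemma gpoly_homog : gpoly.IsHomogeneous 7 :=
  ((isHomogeneous_X_pow (R := ℂ) 1 3).mul (isHomogeneous_X_pow (R := ℂ) 2 4)).C_mul (-12 : ℂ)

lemma eval_gpoly (Q : Pt) : eval Q.rep gpoly = -12 * (Q.rep 1)^3 * (Q.rep 2)^4 := by
  simp [gpoly]; ring

lemma eval_probe_FQ (Q : Pt) :
    eval (cvec 1 2 0) (FQ Q) = -12 * (Q.rep 1)^3 * (Q.rep 2)^4 := by
  simp [FQ, l1, l2, cvec_app0, cvec_app1, cvec_app2]
  ring

lemma FQ_ne {Q : Pt} (hg : eval Q.rep gpoly ≠ 0) : FQ Q ≠ 0 := by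
  intro h
  apply hg
  rw [eval_gpoly, ← eval_probe_FQ Q, h, map_zero]

/-- The nine-point configuration `Z14` admits an unexpected quartic. -/
theorem stmt14 :
    dimHomog (vanishingIdeal Z14) 4 = 6 ∧
    Generically fun Q =>
      dimHomog (vanishingIdeal Z14 ⊓ pointIdeal Q ^ 3) 4 >
        max (dimHomog (vanishingIdeal Z14) 4 - 6) 0 := by
  refine ⟨dim_Z14, gpoly, gpoly_ne, ⟨7, gpoly_homog⟩, ?_⟩
  intro Q hgQ
  have hFQne : FQ Q ≠ 0 := FQ_ne hgQ
  rw [dim_Z14]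
  have hmem : FQ Q ∈ homogComponent (vanishingIdeal Z14 ⊓ pointIdeal Q ^ 3) 4 := by
    rw [homogComponent, Submodule.mem_inf]
    refine ⟨?_, FQ_homog Q⟩
    rw [Submodule.restrictScalars_mem]
    exact Submodule.mem_inf.mpr ⟨FQ_vanishes Q, FQ_mem_pow3 Q⟩
  have hpos : 0 < dimHomog (vanishingIdeal Z14 ⊓ pointIdeal Q ^ 3) 4 := by
    rw [dimHomog]
    haveI := homogComponent_findim (vanishingIdeal Z14 ⊓ pointIdeal Q ^ 3)
    rw [Module.finrank_pos_iff]
    refine nontrivial_of_ne ⟨FQ Q, hmem⟩ 0 ?_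
    intro h
    exact hFQne (congrArg Subtype.val h)
  omega

end
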